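/- Let a > 0 and b ≥ 0 be constants and let x : ℝ → E be a differentiable function into a real inner product space E such that ⟨x(t), x′(t)⟩ ≤ ‖x(t)‖·(b − a‖x(t)‖) for all t ≥ 0. Then limsup_{t→∞} ‖x(t)‖ ≤ b/a; that is, x is uniformly ultimately bounded with respect to the closed ball of radius b/a. -/

import Mathlib

open scoped RealInnerProductSpace
open Filter

/-- Uniform ultimate boundedness: if `⟨x(t), x′(t)⟩ ≤ ‖x(t)‖(b − a‖x(t)‖)`
for all `t ≥ 0` with `a > 0`, `b ≥ 0`, then `limsup_{t→∞} ‖x(t)‖ ≤ b/a`. -/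
theorem uniform_ultimate_boundedness
    {E : Type*} [NormedAddCommGroup E] [InnerProductSpace ℝ E]
    (a b : ℝ) (ha : 0 < a) (hb : 0 ≤ b)
    (x x' : ℝ → E) (hx : ∀ t, HasDerivAt x (x' t) t)
    (h : ∀ t, 0 ≤ t → ⟪x t, x' t⟫ ≤ ‖x t‖ * (b - a * ‖x t‖)) :
    limsup (fun t => ‖x t‖) atTop ≤ b / a ∧
      ∀ ε > 0, ∀ᶠ t in atTop, ‖x t‖ ≤ b / a + ε := by
  set g : ℝ → ℝ := fun t => ‖x t‖ ^ 2 with hgdef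
  have hba : 0 ≤ b / a := div_nonneg hb ha.le
  have hg : ∀ t, HasDerivAt g (2 * ⟪x t, x' t⟫) t := by
    intro t
    have := (hx t).inner ℝ (hx t)
    have h2 : (⟪x t, x' t⟫ + ⟪x' t, x t⟫ : ℝ) = 2 * ⟪x t, x' t⟫ := by
      rw [real_inner_comm (x' t) (x t)]; ring
    rw [h2] at this
    have hfun : g = fun t => ⟪x t, x t⟫ := by
      ext s
      simp [hgdef, real_inner_self_eq_norm_sq]
    rw [hfun]
    exact this
  have hxc : Continuous x := continuous_iff_continuousAt.2 fun t => (hx t).continuousAt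
  have hgc : Continuous g := hxc.norm.pow 2
  -- main eventual bound
  have key : ∀ ε > 0, ∀ᶠ t in atTop, ‖x t‖ ≤ b / a + ε := by
    intro ε hε
    set R : ℝ := b / a + ε with hRdef
    have hR : 0 < R := by positivity
    -- invariance: if g T ≤ R², stays ≤ R²
    have hder_nonpos : ∀ s, 0 ≤ s → R ^ 2 < g s → deriv g s ≤ 0 := by
      intro s hs hgs
      rw [(hg s).deriv]
      have hns : R < ‖x s‖ := by
        by_contra hle
        push_neg at hle
        exact absurd (pow_le_pow_left₀ (norm_nonneg _) hle 2) (not_le_of_gt hgs)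
      have hsum : b - a * ‖x s‖ ≤ 0 := by
        have : b / a < ‖x s‖ := lt_of_le_of_lt (by linarith) hns
        have := (div_lt_iff₀ ha).mp this
        nlinarith
      have := (h s hs).trans (mul_nonpos_of_nonneg_of_nonpos (norm_nonneg _) hsum)
      linarith
    have invar : ∀ T, 0 ≤ T → g T ≤ R ^ 2 → ∀ t, T ≤ t → g t ≤ R ^ 2 := by
      intro T hT hgT t ht
      by_contra hgt
      push_neg at hgt
      have hTt : T < t := by
        rcases eq_or_lt_of_le ht with rfl | h'
        · exact absurd hgT (not_le_of_gt hgt)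
        · exact h'
      set S : Set ℝ := Set.Icc T t ∩ g ⁻¹' Set.Iic (R ^ 2) with hSdef
      have hScomp : IsCompact S :=
        (isCompact_Icc.inter_right (isClosed_Iic.preimage hgc))
      have hSne : S.Nonempty := ⟨T, ⟨le_refl T, hTt.le⟩, hgT⟩
      obtain ⟨hs₀S⟩ : ∃ _ : sSup S ∈ S, True := ⟨hScomp.sSup_mem hSne, trivial⟩
      set s₀ := sSup S with hs₀def
      have hs₀Icc : s₀ ∈ Set.Icc T t := hs₀S.1
      have hgs₀ : g s₀ ≤ R ^ 2 := hs₀S.2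
      have hs₀lt : s₀ < t := by
        rcases eq_or_lt_of_le hs₀Icc.2 with heq | h'
        · exact absurd (heq ▸ hgs₀) (not_le_of_gt hgt)
        · exact h'
      have hgt' : ∀ s ∈ Set.Ioc s₀ t, R ^ 2 < g s := by
        intro s hs
        by_contra hle
        push_neg at hle
        have : s ∈ S := ⟨⟨hs₀Icc.1.trans hs.1.le, hs.2⟩, hle⟩
        exact absurd (le_csSup hScomp.bddAbove this) (not_le_of_gt hs.1)
      have hanti : AntitoneOn g (Set.Icc s₀ t) := by
        apply antitoneOn_of_deriv_nonpos (convex_Icc s₀ t) hgc.continuousOn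
        · intro y _
          exact ((hg y).differentiableAt).differentiableWithinAt
        · intro y hy
          rw [interior_Icc] at hy
          have hy0 : 0 ≤ y := le_trans (le_trans hT hs₀Icc.1) hy.1.le
          exact hder_nonpos y hy0 (hgt' y ⟨hy.1, hy.2.le⟩)
      have := hanti ⟨le_refl s₀, hs₀lt.le⟩ ⟨hs₀lt.le, le_refl t⟩ hs₀lt.le
      exact absurd (this.trans hgs₀) (not_le_of_gt hgt)
    -- entering: there is T ≥ 0 with g T ≤ R²
    have enter : ∃ T, 0 ≤ T ∧ g T ≤ R ^ 2 := by
      by_contra hno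
      push_neg at hno
      set c : ℝ := 2 * a * ε * R with hcdef
      have hc : 0 < c := by positivity
      set φ : ℝ → ℝ := fun t => g t + c * t with hφdef
      set T' : ℝ := g 0 / c + 1 with hT'def
      have hg0 : 0 ≤ g 0 := sq_nonneg _
      have hT' : 0 < T' := by positivity
      have hanti : AntitoneOn φ (Set.Icc 0 T') := by
        apply antitoneOn_of_deriv_nonpos (convex_Icc 0 T')
        · exact (hgc.add (continuous_const.mul continuous_id)).continuousOn
        · intro y _
          exact (((hg y).add ((hasDerivAt_id y).const_mul c)).differentiableAt
            ).differentiableWithinAt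
        · intro y hy
          rw [interior_Icc] at hy
          have hy0 : 0 ≤ y := hy.1.le
          have hdφ : HasDerivAt φ (2 * ⟪x y, x' y⟫ + c * 1) y :=
            (hg y).add ((hasDerivAt_id y).const_mul c)
          rw [hdφ.deriv]
          have hgy := hno y hy0
          have hny : R < ‖x y‖ := by
            by_contra hle
            push_neg at hle
            exact absurd (pow_le_pow_left₀ (norm_nonneg _) hle 2) (not_le_of_gt hgy)
          have hba' : b - a * ‖x y‖ ≤ -(a * ε) := by
            have : a * R = b + a * ε := by
              rw [hRdef, mul_add, mul_div_cancel₀ _ (ne_of_gt ha)]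
            nlinarith
          have hin : ⟪x y, x' y⟫ ≤ ‖x y‖ * (-(a * ε)) :=
            (h y hy0).trans (mul_le_mul_of_nonneg_left hba' (norm_nonneg _))
          have : ‖x y‖ * (-(a * ε)) ≤ R * (-(a * ε)) := by
            apply mul_le_mul_of_nonpos_right hny.le
            nlinarith
          have h2 : 2 * ⟪x y, x' y⟫ ≤ -c := by
            rw [hcdef]; nlinarith
          linarith
      have := hanti ⟨le_refl 0, hT'.le⟩ ⟨hT'.le, le_refl T'⟩ hT'.le
      have hφ0 : φ 0 = g 0 := by simp [hφdef]
      have hgT' : 0 ≤ g T' := sq_nonneg _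
      have hcT' : c * T' = g 0 + c := by
        rw [hT'def]; field_simp
      simp only [hφdef, hφ0] at this
      nlinarith
    obtain ⟨T, hT0, hgT⟩ := enter
    rw [eventually_atTop]
    refine ⟨T, fun t ht => ?_⟩
    have := invar T hT0 hgT t ht
    have h2 : ‖x t‖ ^ 2 ≤ R ^ 2 := this
    nlinarith [norm_nonneg (x t)]
  refine ⟨?_, key⟩
  · apply le_of_forall_pos_le_add
    intro ε hε
    exact limsup_le_of_le (isCoboundedUnder_le_of_eventually_le atTop
      (Eventually.of_forall fun t => norm_nonneg (x t))) (key ε hε)
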